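/- Let p/q = [a_1,...,a_n] in lowest terms with n ≥ 3. The sequence (a_1,...,a_n) is palindromic (a_i = a_{n+1-i} for all i) if and only if p divides q² + (−1)^n. -/

import Mathlib

/-- Value of the continued fraction [a₁,...,aₙ] = a₁ + 1/(a₂ + 1/(... + 1/aₙ)). -/
def cfQ : List ℚ → ℚ
  | [] => 0
  | [a] => a
  | a :: b :: l => a + 1 / cfQ (b :: l)

namespace Stmt10Aux
open Matrix

/-- The elementary matrix for a partial quotient. -/
def A (a : ℕ) : Matrix (Fin 2) (Fin 2) ℤ := !![(a : ℤ), 1; 1, 0]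

/-- Product of elementary matrices. -/
def M : List ℕ → Matrix (Fin 2) (Fin 2) ℤ
  | [] => 1
  | a :: l => A a * M l

lemma M_append_singleton (l : List ℕ) (a : ℕ) : M (l ++ [a]) = M l * A a := by
  induction l with
  | nil => simp [M]
  | cons b t ih => simp [M, ih, Matrix.mul_assoc]

lemma A_transpose (a : ℕ) : (A a)ᵀ = A a := by
  ext i j
  fin_cases i <;> fin_cases j <;> simp [A, Matrix.transpose_apply]

lemma M_reverse (l : List ℕ) : M l.reverse = (M l)ᵀ := by
  induction l with
  | nil => simp [M]
  | cons a t ih =>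
      simp [M, List.reverse_cons, M_append_singleton, ih, Matrix.transpose_mul, A_transpose]

lemma det_A (a : ℕ) : (A a).det = -1 := by simp [A, Matrix.det_fin_two_of]

lemma det_M (l : List ℕ) : (M l).det = (-1) ^ l.length := by
  induction l with
  | nil => simp [M]
  | cons a t ih => rw [M, Matrix.det_mul, det_A, ih]; ring_nf; rw [List.length_cons]; ring

lemma M_cons_00 (a : ℕ) (l : List ℕ) : M (a :: l) 0 0 = a * M l 0 0 + M l 1 0 := by
  simp [M, A, Matrix.mul_apply, Fin.sum_univ_two]

lemma M_cons_10 (a : ℕ) (l : List ℕ) : M (a :: l) 1 0 = M l 0 0 := by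
  simp [M, A, Matrix.mul_apply, Fin.sum_univ_two]

lemma M_cons_01 (a : ℕ) (l : List ℕ) : M (a :: l) 0 1 = a * M l 0 1 + M l 1 1 := by
  simp [M, A, Matrix.mul_apply, Fin.sum_univ_two]

lemma M_cons_11 (a : ℕ) (l : List ℕ) : M (a :: l) 1 1 = M l 0 1 := by
  simp [M, A, Matrix.mul_apply, Fin.sum_univ_two]

lemma cfQ_map_cons (a : ℕ) (t : List ℕ) (ht : t ≠ []) :
    cfQ ((a :: t).map (fun x => (x : ℚ))) = (a : ℚ) + 1 / cfQ (t.map (fun x => (x : ℚ))) := by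
  cases t with
  | nil => exact absurd rfl ht
  | cons b r => rfl

lemma cfQ_map_single (a : ℕ) : cfQ ([a].map (fun x => (x : ℚ))) = (a : ℚ) := rfl

lemma basic (l : List ℕ) (hpos : ∀ x ∈ l, 0 < x) :
    0 < M l 0 0 ∧ 0 ≤ M l 1 0 ∧ M l 1 0 ≤ M l 0 0 := by
  induction l with
  | nil => norm_num [M]
  | cons a t ih =>
      obtain ⟨h1, h2, h3⟩ := ih (fun x hx => hpos x (List.mem_cons_of_mem a hx))
      have ha : 1 ≤ (a : ℤ) := by exact_mod_cast hpos a List.mem_cons_self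
      rw [M_cons_00, M_cons_10]
      refine ⟨by nlinarith, le_of_lt h1, by nlinarith⟩

lemma P_pos (l : List ℕ) (hpos : ∀ x ∈ l, 0 < x) : 0 < M l 0 0 := (basic l hpos).1

lemma Q_pos (l : List ℕ) (hpos : ∀ x ∈ l, 0 < x) (hne : l ≠ []) : 0 < M l 1 0 := by
  cases l with
  | nil => exact absurd rfl hne
  | cons a t =>
      rw [M_cons_10]
      exact P_pos t (fun x hx => hpos x (List.mem_cons_of_mem a hx))

lemma Q_lt_P (l : List ℕ) (hpos : ∀ x ∈ l, 0 < x) (hlen : 2 ≤ l.length) :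
    M l 1 0 < M l 0 0 := by
  cases l with
  | nil => simp at hlen
  | cons a t =>
      have htpos : ∀ x ∈ t, 0 < x := fun x hx => hpos x (List.mem_cons_of_mem a hx)
      have htne : t ≠ [] := by
        intro h; subst h; simp at hlen
      have h1 := P_pos t htpos
      have h2 := Q_pos t htpos htne
      have ha : 1 ≤ (a : ℤ) := by exact_mod_cast hpos a List.mem_cons_self
      rw [M_cons_00, M_cons_10]
      nlinarith

lemma cf_eq (l : List ℕ) (hpos : ∀ x ∈ l, 0 < x) (hne : l ≠ []) :
    cfQ (l.map (fun x => (x : ℚ))) = (M l 0 0 : ℚ) / (M l 1 0 : ℚ) := by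
  induction l with
  | nil => exact absurd rfl hne
  | cons a t ih =>
      cases t with
      | nil => simp [cfQ, M, A, Matrix.mul_apply, Fin.sum_univ_two]
      | cons b r =>
          have htpos : ∀ x ∈ b :: r, 0 < x := fun x hx => hpos x (List.mem_cons_of_mem a hx)
          have hP := P_pos (b :: r) htpos
          have hQ := Q_pos (b :: r) htpos (by simp)
          have hih := ih htpos (by simp)
          have hPQ : (0 : ℚ) < (M (b :: r) 0 0 : ℚ) := by exact_mod_cast hP
          have hQQ : (0 : ℚ) < (M (b :: r) 1 0 : ℚ) := by exact_mod_cast hQ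
          rw [cfQ_map_cons a (b :: r) (by simp), hih, M_cons_00 a (b :: r), M_cons_10 a (b :: r)]
          push_cast
          field_simp

lemma det_entries (l : List ℕ) :
    M l 0 0 * M l 1 1 - M l 0 1 * M l 1 0 = (-1) ^ l.length := by
  rw [← Matrix.det_fin_two]; exact det_M l

lemma coprime_PQ (l : List ℕ) : IsCoprime (M l 0 0) (M l 1 0) := by
  have hdet := det_entries l
  have h1 : ((-1 : ℤ) ^ l.length) * ((-1 : ℤ) ^ l.length) = 1 := by
    rw [← pow_add]
    exact (neg_one_pow_eq_one_iff_even (by norm_num)).2 ⟨l.length, rfl⟩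
  refine ⟨(-1) ^ l.length * M l 1 1, -((-1) ^ l.length * M l 0 1), ?_⟩
  linear_combination ((-1 : ℤ) ^ l.length) * hdet + h1

lemma num_eq (l : List ℕ) (hpos : ∀ x ∈ l, 0 < x) (hne : l ≠ []) :
    (cfQ (l.map (fun x => (x : ℚ)))).num = M l 0 0 := by
  rw [cf_eq l hpos hne]
  exact Rat.num_div_eq_of_coprime (Q_pos l hpos hne)
    (Int.isCoprime_iff_gcd_eq_one.mp (coprime_PQ l))

lemma den_eq (l : List ℕ) (hpos : ∀ x ∈ l, 0 < x) (hne : l ≠ []) :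
    ((cfQ (l.map (fun x => (x : ℚ)))).den : ℤ) = M l 1 0 := by
  rw [cf_eq l hpos hne]
  exact Rat.den_div_eq_of_coprime (Q_pos l hpos hne)
    (Int.isCoprime_iff_gcd_eq_one.mp (coprime_PQ l))

lemma cf_ge_one (l : List ℕ) (hpos : ∀ x ∈ l, 0 < x) (hne : l ≠ []) :
    1 ≤ cfQ (l.map (fun x => (x : ℚ))) := by
  induction l with
  | nil => exact absurd rfl hne
  | cons a t ih =>
      have ha : (1 : ℚ) ≤ (a : ℚ) := by exact_mod_cast hpos a List.mem_cons_self
      cases t with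
      | nil => rw [cfQ_map_single]; exact ha
      | cons b r =>
          have hih := ih (fun x hx => hpos x (List.mem_cons_of_mem a hx)) (by simp)
          rw [cfQ_map_cons a (b :: r) (by simp)]
          have : (0 : ℚ) < 1 / cfQ ((b :: r).map (fun x => (x : ℚ))) := by
            rw [one_div_pos]; linarith
          linarith

lemma cf_inj : ∀ (l1 l2 : List ℕ), (∀ x ∈ l1, 0 < x) → (∀ x ∈ l2, 0 < x) →
    l1.length = l2.length →
    cfQ (l1.map (fun x => (x : ℚ))) = cfQ (l2.map (fun x => (x : ℚ))) → l1 = l2 := by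
  intro l1
  induction l1 with
  | nil =>
      intro l2 _ _ hlen _
      exact (List.length_eq_zero_iff.mp hlen.symm).symm
  | cons a t1 ih =>
      intro l2 h1 h2 hlen hv
      cases l2 with
      | nil => simp at hlen
      | cons b t2 =>
          have ht1pos : ∀ x ∈ t1, 0 < x := fun x hx => h1 x (List.mem_cons_of_mem a hx)
          have ht2pos : ∀ x ∈ t2, 0 < x := fun x hx => h2 x (List.mem_cons_of_mem b hx)
          have hlen' : t1.length = t2.length := by simpa using hlen
          cases t1 with
          | nil =>
              have : t2 = [] := List.length_eq_zero_iff.mp hlen'.symm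
              subst this
              rw [cfQ_map_single, cfQ_map_single] at hv
              have : a = b := by exact_mod_cast hv
              rw [this]
          | cons c r1 =>
              cases t2 with
              | nil => simp at hlen'
              | cons d r2 =>
                  have hv1 := cf_ge_one (c :: r1) ht1pos (by simp)
                  have hv2 := cf_ge_one (d :: r2) ht2pos (by simp)
                  set v1 := cfQ ((c :: r1).map (fun x => (x : ℚ))) with hv1def
                  set v2 := cfQ ((d :: r2).map (fun x => (x : ℚ))) with hv2def
                  have heq : (a : ℚ) + 1 / v1 = (b : ℚ) + 1 / v2 := by
                    rw [hv1def, hv2def, ← cfQ_map_cons a (c :: r1) (by simp),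
                      ← cfQ_map_cons b (d :: r2) (by simp)]
                    exact hv
                  have h01 : 0 < 1 / v1 := by rw [one_div_pos]; linarith
                  have h02 : 0 < 1 / v2 := by rw [one_div_pos]; linarith
                  have h11 : 1 / v1 ≤ 1 := by
                    rw [div_le_one (by linarith)]; linarith
                  have h12 : 1 / v2 ≤ 1 := by
                    rw [div_le_one (by linarith)]; linarith
                  have hab : a = b := by
                    have hlt1 : (a : ℚ) < (b : ℚ) + 1 := by linarith
                    have hlt2 : (b : ℚ) < (a : ℚ) + 1 := by linarith
                    have : a < b + 1 := by exact_mod_cast hlt1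
                    have : b < a + 1 := by exact_mod_cast hlt2
                    omega
                  subst hab
                  have hvv : v1 = v2 := by
                    have : 1 / v1 = 1 / v2 := by linarith
                    field_simp at this
                    linarith
                  have := ih (d :: r2) ht1pos ht2pos hlen' (hvv)
                  rw [this]

end Stmt10Aux

open Stmt10Aux Matrix in
/-- Let p/q = [a₁,...,aₙ] in lowest terms, n ≥ 3. Then (a₁,...,aₙ) is
palindromic iff p divides q² + (−1)ⁿ. -/
theorem stmt10 (l : List ℕ) (hl : 3 ≤ l.length) (hpos : ∀ x ∈ l, 0 < x) :
    l.reverse = l ↔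
      (cfQ (l.map (fun x => (x : ℚ)))).num ∣
        ((cfQ (l.map (fun x => (x : ℚ)))).den : ℤ) ^ 2 + (-1 : ℤ) ^ l.length := by
  have hne : l ≠ [] := by
    intro h; subst h; simp at hl
  have hrevpos : ∀ x ∈ l.reverse, 0 < x := fun x hx => hpos x (List.mem_reverse.mp hx)
  have hrevne : l.reverse ≠ [] := by
    simpa using hne
  rw [num_eq l hpos hne, den_eq l hpos hne]
  set P := M l 0 0 with hP
  set Q := M l 1 0 with hQ
  set R := M l 0 1 with hR
  set S := M l 1 1 with hS
  have hdet : P * S - R * Q = (-1) ^ l.length := det_entries l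
  -- R and Q are the entries of M l.reverse
  have hMrev : M l.reverse = (M l)ᵀ := M_reverse l
  have hRrev : M l.reverse 1 0 = R := by rw [hMrev]; rfl
  have hPrev : M l.reverse 0 0 = P := by rw [hMrev]; rfl
  have hQpos : 0 < Q := Q_pos l hpos hne
  have hQltP : Q < P := Q_lt_P l hpos (by omega)
  have hRpos : 0 < R := by rw [← hRrev]; exact Q_pos l.reverse hrevpos hrevne
  have hRltP : R < P := by
    rw [← hRrev, ← hPrev]
    exact Q_lt_P l.reverse hrevpos (by rw [List.length_reverse]; omega)
  constructor
  · intro hpal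
    have hQR : R = Q := by
      have : M l = (M l)ᵀ := by rw [← hMrev, hpal]
      calc R = M l 0 1 := rfl
        _ = (M l)ᵀ 1 0 := rfl
        _ = M l 1 0 := by rw [← this]
    refine ⟨S, ?_⟩
    rw [hQR] at hdet
    linear_combination -hdet
  · intro hdvd
    have h1 : P ∣ Q * (Q - R) := by
      obtain ⟨k, hk⟩ := hdvd
      exact ⟨k - S, by linear_combination hk + hdet⟩
    have h2 : P ∣ Q - R := (coprime_PQ l).dvd_of_dvd_mul_left h1
    have h3 : Q - R = 0 := by
      obtain ⟨k, hk⟩ := h2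
      have hPpos : 0 < P := P_pos l hpos
      rcases lt_trichotomy k 0 with hk0 | hk0 | hk0
      · nlinarith
      · rw [hk0] at hk; omega
      · nlinarith
    have hQR : R = Q := by omega
    -- the continued fractions of l.reverse and l are equal
    apply cf_inj l.reverse l hrevpos hpos List.length_reverse
    rw [cf_eq l.reverse hrevpos hrevne, cf_eq l hpos hne, hRrev, hPrev, hQR]
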